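/- arXiv:1409.6693 — 4 statements merged into one kernel-verified Lean document; each statement's English description precedes it below -/
import Mathlib

section
/- Let L be a field of characteristic p containing F_q, equipped with a field endomorphism τ that is F_q-linear and whose fixed field is F_q. For elements m_1,...,m_r ∈ L, the Moore matrix M = [τ^{i-1}(m_j)]_{1≤i,j≤r} has nonzero determinant if and only if m_1,...,m_r are linearly independent over F_q. -/
open Finset Function

section MooreAux

variable {Fq L : Type*} [Field Fq] [Field L] [Algebra Fq L]

private lemma tau_indep (τ : L →+* L)
    (hlin : ∀ (c : Fq) (x : L), τ (algebraMap Fq L c * x) = algebraMap Fq L c * τ x)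
    {n : ℕ} {f : Fin n → L} (hf : LinearIndependent Fq f) :
    LinearIndependent Fq (fun k => τ (f k)) := by
  rw [Fintype.linearIndependent_iff] at hf ⊢
  intro g hg
  apply hf
  apply τ.injective
  rw [map_sum, map_zero]
  rw [← hg]
  refine Finset.sum_congr rfl fun k _ => ?_
  rw [Algebra.smul_def, Algebra.smul_def, hlin]

private lemma moore_cols (τ : L →+* L)
    (hlin : ∀ (c : Fq) (x : L), τ (algebraMap Fq L c * x) = algebraMap Fq L c * τ x)
    (hfix : ∀ x : L, τ x = x ↔ ∃ c : Fq, algebraMap Fq L c = x) :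
    ∀ (r : ℕ) (m : Fin r → L), LinearIndependent Fq m →
      ∀ c : Fin r → L, (∀ i : Fin r, ∑ j, c j * (⇑τ)^[(i : ℕ)] (m j) = 0) →
        ∀ j, c j = 0 := by
  intro r
  induction r with
  | zero => intro m _ c _ j; exact j.elim0
  | succ n ih =>
    intro m hm c hc
    by_contra hne
    push_neg at hne
    obtain ⟨j0, hj0⟩ := hne
    set c' : Fin (n + 1) → L := fun j => (c j0)⁻¹ * c j with hc'def
    have hc'0 : c' j0 = 1 := inv_mul_cancel₀ hj0
    have rowEq : ∀ i : Fin (n + 1), ∑ j, c' j * (⇑τ)^[(i : ℕ)] (m j) = 0 := by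
      intro i
      have : ∑ j, c' j * (⇑τ)^[(i : ℕ)] (m j)
          = (c j0)⁻¹ * ∑ j, c j * (⇑τ)^[(i : ℕ)] (m j) := by
        rw [Finset.mul_sum]
        exact Finset.sum_congr rfl fun j _ => (mul_assoc _ _ _)
      rw [this, hc i, mul_zero]
    set d : Fin (n + 1) → L := fun j => τ (c' j) - c' j with hd_def
    have hdj0 : d j0 = 0 := by simp [hd_def, hc'0]
    have hdrel : ∀ i : Fin n, ∑ j, d j * (⇑τ)^[(i : ℕ) + 1] (m j) = 0 := by
      intro i
      have h1 : ∑ j, τ (c' j) * (⇑τ)^[(i : ℕ) + 1] (m j) = 0 := by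
        have h2 := congrArg τ (rowEq ⟨(i : ℕ), Nat.lt_succ_of_lt i.isLt⟩)
        rw [map_sum, map_zero] at h2
        rw [← h2]
        refine Finset.sum_congr rfl fun j _ => ?_
        rw [Function.iterate_succ_apply', ← map_mul]
      have h3 : ∑ j, c' j * (⇑τ)^[(i : ℕ) + 1] (m j) = 0 := by
        have := rowEq i.succ
        simpa [Fin.val_succ] using this
      calc ∑ j, d j * (⇑τ)^[(i : ℕ) + 1] (m j)
          = ∑ j, (τ (c' j) * (⇑τ)^[(i : ℕ) + 1] (m j)
              - c' j * (⇑τ)^[(i : ℕ) + 1] (m j)) := by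
            refine Finset.sum_congr rfl fun j _ => ?_
            rw [hd_def, sub_mul]
        _ = 0 := by rw [Finset.sum_sub_distrib, h1, h3, sub_zero]
    -- apply induction hypothesis
    have hm' : LinearIndependent Fq (fun k : Fin n => τ (m (j0.succAbove k))) :=
      tau_indep τ hlin (hm.comp _ Fin.succAbove_right_injective)
    have hd' : ∀ k : Fin n, d (j0.succAbove k) = 0 := by
      refine ih (fun k => τ (m (j0.succAbove k))) hm' (fun k => d (j0.succAbove k))
        (fun i => ?_)
      have := hdrel i
      rw [Fin.sum_univ_succAbove (fun j => d j * (⇑τ)^[(i : ℕ) + 1] (m j)) j0,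
        hdj0, zero_mul, zero_add] at this
      rw [← this]
      refine Finset.sum_congr rfl fun k _ => ?_
      rw [Function.iterate_succ_apply]
    have hdall : ∀ j, d j = 0 := by
      intro j
      rcases eq_or_ne j j0 with h | h
      · rw [h]; exact hdj0
      · obtain ⟨k, rfl⟩ := Fin.exists_succAbove_eq h
        exact hd' k
    have hfixc : ∀ j, τ (c' j) = c' j := fun j => sub_eq_zero.mp (hdall j)
    choose e he using fun j => (hfix (c' j)).mp (hfixc j)
    have row0 : ∑ j, c' j * m j = 0 := by
      have := rowEq 0
      simpa using this
    have he0 : ∀ j, e j = 0 := by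
      rw [Fintype.linearIndependent_iff] at hm
      apply hm
      rw [← row0]
      refine Finset.sum_congr rfl fun j _ => ?_
      rw [Algebra.smul_def, he]
    have : c' j0 = 0 := by rw [← he j0, he0 j0, map_zero]
    rw [hc'0] at this
    exact one_ne_zero this

end MooreAux

/-- **Moore determinant criterion.** Let `L` be a field of characteristic `p` containing
`𝔽_q`, with an `𝔽_q`-linear field endomorphism `τ` whose fixed field is exactly `𝔽_q`.
For `m₁, …, m_r ∈ L`, the Moore matrix `[τ^{i-1}(m_j)]` has nonzero determinant iff
`m₁, …, m_r` are linearly independent over `𝔽_q`. -/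
theorem moore_determinant_criterion
    {p : ℕ} [Fact p.Prime] {Fq L : Type*} [Field Fq] [Fintype Fq] [Field L]
    [Algebra Fq L] [CharP L p]
    (τ : L →+* L)
    (hlin : ∀ (c : Fq) (x : L), τ (algebraMap Fq L c * x) = algebraMap Fq L c * τ x)
    (hfix : ∀ x : L, τ x = x ↔ ∃ c : Fq, algebraMap Fq L c = x)
    {r : ℕ} (m : Fin r → L) :
    (Matrix.of fun i j : Fin r => (⇑τ)^[(i : ℕ)] (m j)).det ≠ 0 ↔
      LinearIndependent Fq m := by
  have hlinIter : ∀ (k : ℕ) (c : Fq) (x : L),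
      (⇑τ)^[k] (algebraMap Fq L c * x) = algebraMap Fq L c * (⇑τ)^[k] x := by
    intro k
    induction k with
    | zero => intro c x; simp
    | succ k ihk =>
      intro c x
      rw [Function.iterate_succ_apply, hlin, ihk, Function.iterate_succ_apply]
  constructor
  · intro hdet
    rw [Fintype.linearIndependent_iff]
    intro g hg
    by_contra hne
    push_neg at hne
    obtain ⟨j0, hj0⟩ := hne
    apply hdet
    rw [← Matrix.exists_mulVec_eq_zero_iff]
    refine ⟨fun j => algebraMap Fq L (g j), ?_, ?_⟩
    · intro h0
      apply hj0
      have h1 := congrFun h0 j0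
      exact (algebraMap Fq L).injective (by simpa using h1)
    · funext i
      simp only [Matrix.mulVec, dotProduct, Matrix.of_apply, Pi.zero_apply]
      have : ∑ j, algebraMap Fq L (g j) * (⇑τ)^[(i : ℕ)] (m j) = 0 := by
        have hsum : ∑ j, algebraMap Fq L (g j) * (⇑τ)^[(i : ℕ)] (m j)
            = (⇑τ)^[(i : ℕ)] (∑ j, algebraMap Fq L (g j) * m j) := by
          rw [← RingHom.coe_pow, map_sum]
          exact Finset.sum_congr rfl fun j _ => by
            rw [RingHom.coe_pow, hlinIter]
        rw [hsum]
        have : ∑ j, algebraMap Fq L (g j) * m j = 0 := by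
          rw [← hg]
          exact Finset.sum_congr rfl fun j _ => (Algebra.smul_def _ _).symm
        rw [this, ← RingHom.coe_pow, map_zero]
      rw [← this]
      exact Finset.sum_congr rfl fun j _ => mul_comm _ _
  · intro hm
    intro hdet0
    obtain ⟨v, hv0, hv⟩ := Matrix.exists_mulVec_eq_zero_iff.mpr hdet0
    apply hv0
    funext j
    refine moore_cols τ hlin hfix r m hm v (fun i => ?_) j
    have := congrFun hv i
    simp only [Matrix.mulVec, dotProduct, Matrix.of_apply, Pi.zero_apply] at this
    rw [← this]
    exact Finset.sum_congr rfl fun j _ => mul_comm _ _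
end

section
/- The infinite product ω(t) = λ_θ ∏_{i≥0} (1 − t θ^{−q^i})^{−1} converges in the Tate algebra T over C_∞ (its reciprocal λ_θ^{−1} ∏_{i≥0} (1 − t θ^{−q^i}) converges in T), and ω satisfies the τ-difference equation τ(ω) = (t − θ) ω, where τ acts on T by the q-power Frobenius on coefficients. -/
open PowerSeries Filter

noncomputable section

variable {K : Type*} [NontriviallyNormedField K]

/-- A power series lies in the Tate algebra iff its coefficients tend to `0`. -/
def IsRestricted (f : PowerSeries K) : Prop :=
  Tendsto (fun n => ‖coeff n f‖) atTop (nhds 0)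

/-- The Gauss norm on the Tate algebra. -/
def gaussNorm (f : PowerSeries K) : ℝ := ⨆ n, ‖coeff n f‖

/-- The partial products `∏_{i < N} (1 - t θ^{-qⁱ})` of the reciprocal of the
Anderson–Thakur function. -/
def atPartialProd (θ : K) (q N : ℕ) : PowerSeries K :=
  ∏ i ∈ Finset.range N, (1 - PowerSeries.C (θ⁻¹ ^ q ^ i) * PowerSeries.X)

/-- Ultrametric bound for finite sums. -/
lemma norm_finset_sum_le_of_nonarch
    (hna : ∀ x y : K, ‖x + y‖ ≤ max ‖x‖ ‖y‖) {ι : Type*} (s : Finset ι) (f : ι → K)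
    {B : ℝ} (hB : 0 ≤ B) (h : ∀ i ∈ s, ‖f i‖ ≤ B) : ‖∑ i ∈ s, f i‖ ≤ B := by
  classical
  induction s using Finset.induction_on with
  | empty => simpa using hB
  | @insert a s ha ih =>
    rw [Finset.sum_insert ha]
    exact le_trans (hna _ _) (max_le (h a (Finset.mem_insert_self a s))
      (ih fun i hi => h i (Finset.mem_insert_of_mem hi)))

/-- **The Anderson–Thakur function.**  Over `K = ℂ_∞` with `‖θ‖ = q > 1` and
`λ_θ^{q-1} = -θ`, the product `∏_{i ≥ 0}(1 - t θ^{-qⁱ})` converges in the Tate algebra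
(in Gauss norm) to a restricted power series `P`, and
`ω = λ_θ · P⁻¹` satisfies the `τ`-difference equation `τ(ω) = (t - θ)·ω`, where `τ`
acts by the `q`-power Frobenius `φ` on coefficients. -/
theorem anderson_thakur_function
    [CompleteSpace K] (hna : ∀ x y : K, ‖x + y‖ ≤ max ‖x‖ ‖y‖)
    (q : ℕ) (hq : 1 < q) (θ lam : K) (hθ : ‖θ‖ = (q : ℝ))
    (hlam : lam ^ (q - 1) = -θ)
    (φ : K →+* K) (hφ : ∀ x, φ x = x ^ q) :
    ∃ P : PowerSeries K,
      Tendsto (fun N => gaussNorm (atPartialProd θ q N - P)) atTop (nhds 0) ∧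
      IsRestricted P ∧
      IsRestricted (PowerSeries.C lam * P⁻¹) ∧
      PowerSeries.map φ (PowerSeries.C lam * P⁻¹) =
        (PowerSeries.X - PowerSeries.C θ) * (PowerSeries.C lam * P⁻¹) := by
  classical
  have hq1R : (1:ℝ) < (q:ℝ) := by exact_mod_cast hq
  have hθ0 : θ ≠ 0 := by
    intro h; rw [h, norm_zero] at hθ; linarith
  set r : ℝ := (q:ℝ)⁻¹ with hrdef
  have hr0 : 0 < r := by positivity
  have hr1 : r < 1 := inv_lt_one_of_one_lt₀ hq1R
  have hna' : ∀ x y : K, ‖x - y‖ ≤ max ‖x‖ ‖y‖ := by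
    intro x y
    rw [sub_eq_add_neg]
    have h := hna x (-y)
    rwa [norm_neg] at h
  set p : ℕ → PowerSeries K := atPartialProd θ q with hpdef
  have hpsucc : ∀ N, p (N+1) = p N * (1 - C (θ⁻¹ ^ q ^ N) * X) := fun N =>
    Finset.prod_range_succ _ N
  -- norm bound on the factors
  have hai : ∀ i : ℕ, ‖θ⁻¹ ^ q ^ i‖ ≤ r ^ (i+1) := by
    intro i
    rw [norm_pow, norm_inv, hθ]
    exact pow_le_pow_of_le_one hr0.le hr1.le (Nat.lt_pow_self hq (n := i))
  -- coefficient extraction for multiplication by (1 - C a * X)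
  have hcm0 : ∀ (f : PowerSeries K) (a : K),
      coeff 0 (f * (1 - C a * X)) = coeff 0 f := by
    intro f a
    have h : f * (1 - C a * X) = f - C a * (X * f) := by ring
    rw [h, map_sub, coeff_C_mul, coeff_zero_X_mul, mul_zero, sub_zero]
  have hcms : ∀ (f : PowerSeries K) (a : K) (n : ℕ),
      coeff (n+1) (f * (1 - C a * X)) = coeff (n+1) f - a * coeff n f := by
    intro f a n
    have h : f * (1 - C a * X) = f - C a * (X * f) := by ring
    rw [h, map_sub, coeff_C_mul, coeff_succ_X_mul]
  -- all coefficients of partial products are bounded by 1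
  have hbound : ∀ N n, ‖coeff n (p N)‖ ≤ 1 := by
    intro N
    induction N with
    | zero =>
      intro n
      simp only [hpdef, atPartialProd, Finset.range_zero, Finset.prod_empty, coeff_one]
      split <;> simp
    | succ N ih =>
      intro n
      rw [hpsucc]
      cases n with
      | zero => rw [hcm0]; exact ih 0
      | succ n =>
        rw [hcms]
        refine le_trans (hna' _ _) (max_le (ih (n+1)) ?_)
        rw [norm_mul]
        have h1 : ‖θ⁻¹ ^ q ^ N‖ ≤ 1 :=
          le_trans (hai N) (pow_le_one₀ hr0.le hr1.le)
        calc ‖θ⁻¹ ^ q ^ N‖ * ‖coeff n (p N)‖ ≤ 1 * 1 :=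
              mul_le_mul h1 (ih n) (norm_nonneg _) zero_le_one
          _ = 1 := mul_one 1
  -- differences of partial products
  have hdiff : ∀ N M, N ≤ M → ∀ n, ‖coeff n (p M - p N)‖ ≤ r ^ (N+1) := by
    intro N M hNM
    induction M, hNM using Nat.le_induction with
    | base => intro n; simp [pow_nonneg hr0.le]
    | succ M hNM ih =>
      intro n
      have key : ∀ m, ‖coeff m (p (M+1) - p M)‖ ≤ r ^ (N+1) := by
        intro m
        have h : p (M+1) - p M = -(C (θ⁻¹ ^ q ^ M) * (X * p M)) := by
          rw [hpsucc]; ring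
        rw [h, map_neg, norm_neg, coeff_C_mul, norm_mul]
        have h2 : ‖coeff m (X * p M)‖ ≤ 1 := by
          cases m with
          | zero => simp [coeff_zero_X_mul]
          | succ m => rw [coeff_succ_X_mul]; exact hbound M m
        calc ‖θ⁻¹ ^ q ^ M‖ * ‖coeff m (X * p M)‖ ≤ r ^ (M+1) * 1 :=
              mul_le_mul (hai M) h2 (norm_nonneg _) (by positivity)
          _ = r ^ (M+1) := mul_one _
          _ ≤ r ^ (N+1) := pow_le_pow_of_le_one hr0.le hr1.le (by omega)
      have h : p (M+1) - p N = (p (M+1) - p M) + (p M - p N) := by ring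
      rw [h, map_add]
      refine le_trans (hna _ _) (max_le (key n) (ih n))
  have hrt : Tendsto (fun N : ℕ => r ^ (N+1)) atTop (nhds 0) :=
    (tendsto_pow_atTop_nhds_zero_of_lt_one hr0.le hr1).comp (tendsto_add_atTop_nat 1)
  -- convergence of coefficients
  have hcauchy : ∀ n, ∃ l : K, Tendsto (fun N => coeff n (p N)) atTop (nhds l) := by
    intro n
    apply cauchySeq_tendsto_of_complete
    apply cauchySeq_of_le_tendsto_0' (fun N => r ^ (N+1)) _ hrt
    intro N M hNM
    rw [dist_eq_norm, norm_sub_rev, ← map_sub]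
    exact hdiff N M hNM n
  choose c hc using hcauchy
  set P : PowerSeries K := PowerSeries.mk c with hPdef
  have hcoeffP : ∀ n, coeff n P = c n := fun n => coeff_mk n c
  -- limit bound
  have hcb : ∀ N n, ‖c n - coeff n (p N)‖ ≤ r ^ (N+1) := by
    intro N n
    have h1 : Tendsto (fun M => ‖coeff n (p M) - coeff n (p N)‖) atTop
        (nhds ‖c n - coeff n (p N)‖) := (((hc n).sub tendsto_const_nhds).norm)
    refine le_of_tendsto h1 ?_
    filter_upwards [eventually_ge_atTop N] with M hM
    simpa [map_sub] using hdiff N M hM n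
  -- Gauss norm convergence
  have hgb : ∀ N, gaussNorm (p N - P) ≤ r ^ (N+1) := by
    intro N
    apply ciSup_le
    intro n
    rw [map_sub, hcoeffP, norm_sub_rev]
    exact hcb N n
  have hg0 : ∀ N, 0 ≤ gaussNorm (p N - P) := by
    intro N
    have hbdd : BddAbove (Set.range fun n => ‖coeff n (p N - P)‖) := by
      refine ⟨r ^ (N+1), ?_⟩
      rintro x ⟨n, rfl⟩
      show ‖coeff n (p N - P)‖ ≤ r ^ (N+1)
      rw [map_sub, hcoeffP, norm_sub_rev]
      exact hcb N n
    exact le_trans (norm_nonneg _) (le_ciSup hbdd 0)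
  have hconv : Tendsto (fun N => gaussNorm (p N - P)) atTop (nhds 0) :=
    squeeze_zero hg0 hgb hrt
  -- constant coefficient
  have hP0' : ∀ N, coeff 0 (p N) = 1 := by
    intro N
    induction N with
    | zero => simp [hpdef, atPartialProd]
    | succ N ih => rw [hpsucc, hcm0]; exact ih
  have hc0 : c 0 = 1 := by
    have h1 : Tendsto (fun _ : ℕ => (1:K)) atTop (nhds (c 0)) := by
      simpa [hP0'] using hc 0
    exact (tendsto_nhds_unique h1 tendsto_const_nhds)
  -- vanishing of high coefficients of partial products
  have hvan : ∀ N m, N < m → coeff m (p N) = 0 := by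
    intro N
    induction N with
    | zero =>
      intro m hm
      simp only [hpdef, atPartialProd, Finset.range_zero, Finset.prod_empty, coeff_one]
      exact if_neg (by omega)
    | succ N ih =>
      intro m hm
      match m, hm with
      | m+1, hm =>
        rw [hpsucc, hcms, ih m (by omega), ih (m+1) (by omega), mul_zero, sub_zero]
  -- coefficient decay of P
  have hcn : ∀ n, ‖c n‖ ≤ r ^ n := by
    intro n
    cases n with
    | zero => simp [hc0]
    | succ n =>
      have := hcb n (n+1)
      rwa [hvan n (n+1) (lt_add_one n), sub_zero] at this
  have hresP : IsRestricted P := by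
    unfold _root_.IsRestricted
    refine squeeze_zero (fun n => norm_nonneg _) (fun n => ?_)
      (tendsto_pow_atTop_nhds_zero_of_lt_one hr0.le hr1)
    rw [hcoeffP]; exact hcn n
  -- the inverse
  have hcc : constantCoeff P = 1 := by
    rw [← coeff_zero_eq_constantCoeff, hcoeffP]; exact hc0
  have hccne : constantCoeff P ≠ 0 := by rw [hcc]; exact one_ne_zero
  have hd : ∀ n, ‖coeff n P⁻¹‖ ≤ r ^ n := by
    intro n
    induction n using Nat.strong_induction_on with
    | _ n ih =>
      rcases Nat.eq_zero_or_pos n with rfl | hn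
      · rw [coeff_inv, if_pos rfl, hcc, inv_one]
        simp
      · rw [coeff_inv, if_neg hn.ne', hcc, inv_one, neg_mul, one_mul, norm_neg]
        refine norm_finset_sum_le_of_nonarch hna _ _ (pow_nonneg hr0.le n) ?_
        rintro ⟨i, j⟩ hx
        have hij : i + j = n := Finset.HasAntidiagonal.mem_antidiagonal.mp hx
        dsimp only
        split
        · next hj =>
          rw [norm_mul, hcoeffP]
          calc ‖c i‖ * ‖coeff j P⁻¹‖ ≤ r ^ i * r ^ j :=
                mul_le_mul (hcn i) (ih j (by omega)) (norm_nonneg _) (pow_nonneg hr0.le i)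
            _ = r ^ n := by rw [← pow_add, hij]
        · simpa using pow_nonneg hr0.le n
  have hresW : IsRestricted (C lam * P⁻¹) := by
    unfold _root_.IsRestricted
    have hrt2 : Tendsto (fun n : ℕ => ‖lam‖ * r ^ n) atTop (nhds 0) := by
      simpa using (tendsto_pow_atTop_nhds_zero_of_lt_one hr0.le hr1).const_mul ‖lam‖
    refine squeeze_zero (fun n => norm_nonneg _) (fun n => ?_) hrt2
    rw [coeff_C_mul, norm_mul]
    exact mul_le_mul_of_nonneg_left (hd n) (norm_nonneg _)
  -- functional equation for P
  have hφc : Continuous (φ : K → K) := by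
    have h : (φ : K → K) = fun x => x ^ q := funext hφ
    rw [h]; exact continuous_pow q
  have hmapp : ∀ N, PowerSeries.map φ (p N)
      = ∏ i ∈ Finset.range N, (1 - C (θ⁻¹ ^ q ^ (i+1)) * X) := by
    intro N
    rw [hpdef]
    unfold atPartialProd
    rw [map_prod]
    refine Finset.prod_congr rfl fun i _ => ?_
    rw [map_sub, map_one, map_mul, PowerSeries.map_C, PowerSeries.map_X, hφ,
      ← pow_mul, ← pow_succ]
  have hfe : ∀ N, p (N+1) = (1 - C θ⁻¹ * X) * PowerSeries.map φ (p N) := by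
    intro N
    rw [hmapp]
    have h : p (N+1) = (∏ i ∈ Finset.range N, (1 - C (θ⁻¹ ^ q ^ (i+1)) * X)) *
        (1 - C (θ⁻¹ ^ q ^ 0) * X) := Finset.prod_range_succ' _ N
    rw [h, pow_zero, pow_one, mul_comm]
  have hPfe : P = (1 - C θ⁻¹ * X) * PowerSeries.map φ P := by
    have e : ∀ (g : PowerSeries K) (n : ℕ), coeff (n+1) ((1 - C θ⁻¹ * X) * g)
        = coeff (n+1) g - θ⁻¹ * coeff n g := by
      intro g n; rw [mul_comm]; exact hcms g θ⁻¹ n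
    ext n
    cases n with
    | zero =>
      rw [hcoeffP, hc0, mul_comm, hcm0, coeff_map, hcoeffP, hc0, map_one]
    | succ n =>
      have hL : Tendsto (fun N => coeff (n+1) ((1 - C θ⁻¹ * X) * PowerSeries.map φ (p N)))
          atTop (nhds (c (n+1))) := by
        have h1 : Tendsto (fun N => coeff (n+1) (p (N+1))) atTop (nhds (c (n+1))) :=
          (hc (n+1)).comp (tendsto_add_atTop_nat 1)
        refine h1.congr fun N => ?_
        rw [← hfe]
      have hR : Tendsto (fun N => coeff (n+1) ((1 - C θ⁻¹ * X) * PowerSeries.map φ (p N)))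
          atTop (nhds (φ (c (n+1)) - θ⁻¹ * φ (c n))) := by
        have h2 : Tendsto (fun N => φ (coeff (n+1) (p N)) - θ⁻¹ * φ (coeff n (p N)))
            atTop (nhds (φ (c (n+1)) - θ⁻¹ * φ (c n))) :=
          Tendsto.sub ((hφc.tendsto _).comp (hc (n+1)))
            (Tendsto.const_mul _ ((hφc.tendsto _).comp (hc n)))
        refine h2.congr fun N => ?_
        rw [e, coeff_map, coeff_map]
      have huniq : c (n+1) = φ (c (n+1)) - θ⁻¹ * φ (c n) := tendsto_nhds_unique hL hR
      rw [hcoeffP, e, coeff_map, coeff_map, hcoeffP, hcoeffP]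
      exact huniq
  -- final algebra
  set Q : PowerSeries K := PowerSeries.map φ P with hQdef
  have hQcc : constantCoeff Q = 1 := by
    rw [hQdef, ← coeff_zero_eq_constantCoeff, coeff_map, hcoeffP, hc0, map_one]
  have hQccne : constantCoeff Q ≠ 0 := by rw [hQcc]; exact one_ne_zero
  have hPinv : P * P⁻¹ = 1 := PowerSeries.mul_inv_cancel P hccne
  have hQinv : Q * Q⁻¹ = 1 := PowerSeries.mul_inv_cancel Q hQccne
  have hmapinv : PowerSeries.map φ P⁻¹ = Q⁻¹ := by
    have h1 : Q * PowerSeries.map φ P⁻¹ = 1 := by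
      rw [hQdef, ← map_mul, hPinv, map_one]
    calc PowerSeries.map φ P⁻¹ = (Q⁻¹ * Q) * PowerSeries.map φ P⁻¹ := by
          rw [PowerSeries.inv_mul_cancel Q hQccne, one_mul]
      _ = Q⁻¹ * (Q * PowerSeries.map φ P⁻¹) := mul_assoc _ _ _
      _ = Q⁻¹ := by rw [h1, mul_one]
  have hPne : P ≠ 0 := by
    intro h; rw [h] at hcc; simp at hcc
  have hQne : Q ≠ 0 := by
    intro h; rw [h] at hQcc; simp at hQcc
  have hlamq : lam ^ q = -θ * lam := by
    conv_lhs => rw [show q = (q-1)+1 by omega]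
    rw [pow_succ, hlam]
  have hCθ : C θ * C θ⁻¹ = 1 := by
    rw [← map_mul, mul_inv_cancel₀ hθ0, map_one]
  have key : C (-θ * lam) * P = (X - C θ) * (C lam * Q) := by
    have hC : C (-θ * lam) = -(C θ * C lam) := by
      rw [neg_mul, map_neg, map_mul]
    rw [hPfe, hC]
    linear_combination (C lam * X * Q) * hCθ
  refine ⟨P, hconv, hresP, hresW, ?_⟩
  rw [map_mul, PowerSeries.map_C, hmapinv, hφ, hlamq]
  refine mul_right_cancel₀ (mul_ne_zero hPne hQne) ?_
  linear_combination (C (-θ * lam) * P) * hQinv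
    - ((X - C θ) * (C lam) * Q) * hPinv + key

end
end

section
/- Let Λ ⊂ C_∞ be a finitely generated (hence free) A-submodule that is discrete (every bounded subset of C_∞ meets Λ in a finite set), where A = F_q[θ]. Then the product e_Λ(w) = w ∏_{0≠λ∈Λ} (1 − w/λ) converges for every w ∈ C_∞, defining an F_q-linear, surjective function e_Λ: C_∞ → C_∞ with kernel exactly Λ. -/
open Filter Polynomial Finset Topology

set_option linter.unusedSectionVars false
set_option linter.unusedVariables false
set_option maxHeartbeats 1000000




section Ultra
variable {K : Type*} [NormedField K] {ι : Type*}

lemma hna_sub (hna : ∀ x y : K, ‖x + y‖ ≤ max ‖x‖ ‖y‖) (x y : K) :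
    ‖x - y‖ ≤ max ‖x‖ ‖y‖ := by
  simpa [sub_eq_add_neg] using hna x (-y)

lemma hna_add_eq (hna : ∀ x y : K, ‖x + y‖ ≤ max ‖x‖ ‖y‖) {x y : K} (h : ‖x‖ < ‖y‖) :
    ‖x + y‖ = ‖y‖ := by
  refine le_antisymm ((hna x y).trans (by simp [h.le])) ?_
  by_contra hlt
  push_neg at hlt
  have : ‖y‖ ≤ max ‖x + y‖ ‖x‖ := by
    simpa using hna_sub hna (x + y) x
  rcases max_cases ‖x + y‖ ‖x‖ with ⟨he, _⟩ | ⟨he, _⟩ <;> rw [he] at this <;> linarith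

lemma prod_sub_one_le (hna : ∀ x y : K, ‖x + y‖ ≤ max ‖x‖ ‖y‖)
    (s : Finset ι) (f : ι → K) {ε : ℝ} (hε0 : 0 ≤ ε) (hε1 : ε ≤ 1)
    (h : ∀ i ∈ s, ‖f i - 1‖ ≤ ε) :
    ‖∏ i ∈ s, f i - 1‖ ≤ ε := by
  classical
  induction s using Finset.induction_on with
  | empty => simpa
  | @insert a s ha ih =>
    have hP : ‖∏ i ∈ s, f i - 1‖ ≤ ε := ih fun i hi => h i (Finset.mem_insert_of_mem hi)
    have hPle : ‖∏ i ∈ s, f i‖ ≤ 1 := by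
      calc ‖∏ i ∈ s, f i‖ = ‖(∏ i ∈ s, f i - 1) + 1‖ := by ring_nf
        _ ≤ max ‖∏ i ∈ s, f i - 1‖ ‖(1:K)‖ := hna _ _
        _ ≤ 1 := by simp [max_le_iff]; linarith
    have key : f a * ∏ i ∈ s, f i - 1
        = (f a - 1) * ∏ i ∈ s, f i + (∏ i ∈ s, f i - 1) := by ring
    rw [Finset.prod_insert ha, key]
    refine (hna _ _).trans (max_le ?_ hP)
    rw [norm_mul]
    calc ‖f a - 1‖ * ‖∏ i ∈ s, f i‖ ≤ ε * 1 :=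
      mul_le_mul (h a (Finset.mem_insert_self a s)) hPle (norm_nonneg _) hε0
      _ = ε := mul_one ε

lemma multipliable_of_norm_sub_one (hna : ∀ x y : K, ‖x + y‖ ≤ max ‖x‖ ‖y‖)
    [CompleteSpace K] {f : ι → K} (hf : ∀ ε : ℝ, 0 < ε → {i | ε ≤ ‖f i - 1‖}.Finite) :
    Multipliable f := by
  classical
  have hc : CauchySeq fun s : Finset ι => ∏ i ∈ s, f i := by
    rw [Metric.cauchySeq_iff]
    intro ε hε
    set N₁ : Finset ι := (hf 1 one_pos).toFinset with hN₁
    set C : ℝ := ‖∏ i ∈ N₁, f i‖ with hC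
    have hC0 : 0 ≤ C := norm_nonneg _
    set δ : ℝ := min 1 (ε / (2 * (C + 1))) with hδ
    have hδ0 : 0 < δ := lt_min one_pos (by positivity)
    have hδ1 : δ ≤ 1 := min_le_left _ _
    set N : Finset ι := N₁ ∪ (hf δ hδ0).toFinset with hN
    refine ⟨N, fun m hm n hn => ?_⟩
    -- bound on the head product
    have hhead : ∀ t : Finset ι, N ⊆ t → ‖∏ i ∈ N, f i‖ ≤ C := by
      intro t _
      have hsub : N₁ ⊆ N := Finset.subset_union_left
      rw [← Finset.prod_sdiff hsub, norm_mul]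
      have h1 : ‖∏ i ∈ N \ N₁, f i‖ ≤ 1 := by
        rw [norm_prod]
        refine Finset.prod_le_one (fun i _ => norm_nonneg _) ?_
        intro i hi
        have hi' : ‖f i - 1‖ < 1 := by
          by_contra hcon
          push_neg at hcon
          exact (Finset.mem_sdiff.1 hi).2 (by simp [hN₁, Set.Finite.mem_toFinset]; exact hcon)
        calc ‖f i‖ = ‖(f i - 1) + 1‖ := by ring_nf
          _ ≤ max ‖f i - 1‖ ‖(1:K)‖ := hna _ _
          _ ≤ 1 := by simp [max_le_iff]; linarith
      calc ‖∏ i ∈ N \ N₁, f i‖ * ‖∏ i ∈ N₁, f i‖ ≤ 1 * C :=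
        mul_le_mul h1 le_rfl (norm_nonneg _) zero_le_one
        _ = C := one_mul C
    have htail : ∀ t : Finset ι, N ⊆ t → ‖∏ i ∈ t \ N, f i - 1‖ ≤ δ := by
      intro t ht
      refine prod_sub_one_le hna _ _ hδ0.le hδ1 ?_
      intro i hi
      have : i ∉ (hf δ hδ0).toFinset := fun hcon =>
        (Finset.mem_sdiff.1 hi).2 (Finset.mem_union_right _ hcon)
      rw [Set.Finite.mem_toFinset] at this
      simp only [Set.mem_setOf_eq, not_le] at this
      exact this.le
    have hsplit : ∀ t : Finset ι, N ⊆ t →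
        ∏ i ∈ t, f i = (∏ i ∈ t \ N, f i) * ∏ i ∈ N, f i := by
      intro t ht; rw [Finset.prod_sdiff ht]
    rw [dist_eq_norm, hsplit m hm, hsplit n hn, ← sub_mul]
    rw [norm_mul]
    have hdiff : ‖(∏ i ∈ m \ N, f i) - ∏ i ∈ n \ N, f i‖ ≤ δ := by
      have := hna_sub hna ((∏ i ∈ m \ N, f i) - 1) ((∏ i ∈ n \ N, f i) - 1)
      have heq : (∏ i ∈ m \ N, f i) - ∏ i ∈ n \ N, f i
          = ((∏ i ∈ m \ N, f i) - 1) - ((∏ i ∈ n \ N, f i) - 1) := by ring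
      rw [heq]
      exact this.trans (max_le (htail m hm) (htail n hn))
    calc ‖(∏ i ∈ m \ N, f i) - ∏ i ∈ n \ N, f i‖ * ‖∏ i ∈ N, f i‖
        ≤ δ * C := mul_le_mul hdiff (hhead m hm) (norm_nonneg _) hδ0.le
      _ ≤ (ε / (2 * (C + 1))) * C := by
          apply mul_le_mul_of_nonneg_right (min_le_right _ _) hC0
      _ < ε := by
          rw [div_mul_eq_mul_div, div_lt_iff₀ (by positivity)]
          nlinarith
  obtain ⟨a, ha⟩ := cauchySeq_tendsto_of_complete hc
  exact ⟨a, ha⟩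

lemma norm_tprod_sub_one_le (hna : ∀ x y : K, ‖x + y‖ ≤ max ‖x‖ ‖y‖)
    {f : ι → K} (hm : Multipliable f) {ε : ℝ} (hε0 : 0 ≤ ε) (hε1 : ε ≤ 1)
    (h : ∀ i, ‖f i - 1‖ ≤ ε) :
    ‖(∏' i, f i) - 1‖ ≤ ε := by
  have hp := hm.hasProd
  have : Tendsto (fun s : Finset ι => ‖∏ i ∈ s, f i - 1‖) atTop (𝓝 ‖(∏' i, f i) - 1‖) :=
    ((hp.sub_const 1).norm)
  exact le_of_tendsto this (Filter.Eventually.of_forall fun s =>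
    prod_sub_one_le hna s f hε0 hε1 fun i _ => h i)

lemma norm_tprod_le_one (hna : ∀ x y : K, ‖x + y‖ ≤ max ‖x‖ ‖y‖)
    {f : ι → K} (hm : Multipliable f) {ε : ℝ} (hε0 : 0 ≤ ε) (hε1 : ε ≤ 1)
    (h : ∀ i, ‖f i - 1‖ ≤ ε) :
    ‖(∏' i, f i)‖ ≤ 1 := by
  have h1 := norm_tprod_sub_one_le hna hm hε0 hε1 h
  calc ‖(∏' i, f i)‖ = ‖((∏' i, f i) - 1) + 1‖ := by ring_nf
    _ ≤ max ‖(∏' i, f i) - 1‖ ‖(1:K)‖ := hna _ _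
    _ ≤ 1 := by simp [max_le_iff]; linarith

end Ultra



section Poly
variable {K : Type*} [Field K]

noncomputable def latticePoly (V : Finset K) : K[X] := ∏ v ∈ V, (X - C v)

lemma latticePoly_monic (V : Finset K) : (latticePoly V).Monic :=
  monic_prod_of_monic _ _ fun v _ => monic_X_sub_C v

lemma latticePoly_natDegree (V : Finset K) : (latticePoly V).natDegree = V.card := by
  rw [latticePoly, natDegree_prod]
  · simp
  · intro v _; exact X_sub_C_ne_zero v

lemma latticePoly_eval (V : Finset K) (x : K) :
    (latticePoly V).eval x = ∏ v ∈ V, (x - v) := by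
  simp [latticePoly, eval_prod]

lemma latticePoly_root (V : Finset K) {v : K} (hv : v ∈ V) :
    (latticePoly V).eval v = 0 := by
  rw [latticePoly_eval]
  exact Finset.prod_eq_zero hv (by simp)

section closed
variable {V : Finset K} (h0 : (0:K) ∈ V)
  (hadd : ∀ a ∈ V, ∀ b ∈ V, a + b ∈ V) (hneg : ∀ a ∈ V, -a ∈ V)

include h0 hadd hneg

lemma latticePoly_shift (x : K) {v : K} (hv : v ∈ V) :
    (latticePoly V).eval (x + v) = (latticePoly V).eval x := by
  classical
  have himg : V.image (fun u => u - v) = V := by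
    apply Finset.eq_of_subset_of_card_le
    · intro u hu
      obtain ⟨a, ha, rfl⟩ := Finset.mem_image.1 hu
      simpa [sub_eq_add_neg] using hadd a ha _ (hneg v hv)
    · rw [Finset.card_image_of_injective _ (sub_left_injective)]
  rw [latticePoly_eval, latticePoly_eval]
  conv_rhs => rw [← himg]
  rw [Finset.prod_image (by intro a _ b _ h; exact sub_left_injective h)]
  refine Finset.prod_congr rfl fun u _ => by ring

lemma latticePoly_map_add (x y : K) :
    (latticePoly V).eval (x + y)
      = (latticePoly V).eval x + (latticePoly V).eval y := by
  classical
  set f := latticePoly V with hf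
  have hN : 1 ≤ V.card := Finset.card_pos.2 ⟨0, h0⟩
  set p : K[X] := f.comp (X + C x) - C (f.eval x) - f with hp
  have hroots : ∀ v ∈ V, p.eval v = 0 := by
    intro v hv
    simp only [hp, eval_sub, eval_comp, eval_add, eval_X, eval_C]
    rw [show v + x = x + v from add_comm _ _,
      latticePoly_shift h0 hadd hneg x hv, latticePoly_root V hv]
    ring
  have hpz : p = 0 := by
    by_cases hc : p = 0
    · exact hc
    refine eq_zero_of_natDegree_lt_card_of_eval_eq_zero' p V hroots ?_
    rw [natDegree_lt_iff_degree_lt hc]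
    have hd1 : f.comp (X + C x) - f ≠ 0 → True := fun _ => trivial
    have hmon : f.Monic := latticePoly_monic V
    have hmonc : (f.comp (X + C x)).Monic := hmon.comp_X_add_C x
    have hdeg : (f.comp (X + C x)).degree = f.degree := by
      rw [degree_eq_natDegree hmonc.ne_zero, degree_eq_natDegree hmon.ne_zero]
      norm_cast
      rw [natDegree_comp]
      simp
    have hsub : (f.comp (X + C x) - f).degree < f.degree := by
      rw [← hdeg]
      exact degree_sub_lt hdeg hmonc.ne_zero (by rw [hmonc.leadingCoeff, hmon.leadingCoeff])
    have hCdeg : (C (f.eval x) : K[X]).degree < f.degree := by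
      refine lt_of_le_of_lt degree_C_le ?_
      rw [degree_eq_natDegree hmon.ne_zero, latticePoly_natDegree]
      exact_mod_cast hN
    have : p.degree < f.degree := by
      have : p = (f.comp (X + C x) - f) - C (f.eval x) := by rw [hp]; ring
      rw [this]
      exact lt_of_le_of_lt (degree_sub_le _ _) (max_lt hsub hCdeg)
    rw [degree_eq_natDegree hmon.ne_zero, latticePoly_natDegree] at this
    exact_mod_cast this
  have := congrArg (Polynomial.eval y) hpz
  simp only [hp, eval_sub, eval_comp, eval_add, eval_X, eval_C, eval_zero] at this
  rw [add_comm x y]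
  linear_combination this

lemma latticePoly_map_smul {c : K} (hc : c ≠ 0)
    (hmulV : ∀ a ∈ V, c * a ∈ V) (x : K) :
    (latticePoly V).eval (c * x) = c ^ V.card * (latticePoly V).eval x := by
  classical
  have himg : V.image (fun u => c * u) = V := by
    apply Finset.eq_of_subset_of_card_le
    · intro u hu
      obtain ⟨a, ha, rfl⟩ := Finset.mem_image.1 hu
      exact hmulV a ha
    · rw [Finset.card_image_of_injective _ (mul_right_injective₀ hc)]
  rw [latticePoly_eval, latticePoly_eval]
  conv_lhs => rw [← himg]
  rw [Finset.prod_image (by intro a _ b _ h; exact mul_right_injective₀ hc h)]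
  have hfac : ∀ u : K, c * x - c * u = c * (x - u) := fun u => by ring
  simp_rw [hfac]
  rw [Finset.prod_mul_distrib, Finset.prod_const]

end closed
end Poly


lemma lattice_prod_eq {K : Type*} [Field K] [DecidableEq K] {V : Finset K}
    (h0 : (0:K) ∈ V) (w : K) :
    w * ∏ v ∈ V.erase 0, (1 - w * v⁻¹)
      = (∏ v ∈ V.erase 0, (-v⁻¹)) * (latticePoly V).eval w := by
  rw [latticePoly_eval, ← Finset.mul_prod_erase V _ h0]
  have heq : ∏ v ∈ V.erase 0, (1 - w * v⁻¹) =
      ∏ v ∈ V.erase 0, ((w - v) * (-v⁻¹)) := by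
    refine Finset.prod_congr rfl fun v hv => ?_
    have hv0 : v ≠ 0 := (Finset.mem_erase.1 hv).1
    have : (w - v) * (-v⁻¹) = -(w * v⁻¹) + v * v⁻¹ := by ring
    rw [this, mul_inv_cancel₀ hv0]
    ring
  rw [heq, Finset.prod_mul_distrib]
  ring

section RootLemma
variable {K : Type*} [NormedField K] [IsAlgClosed K]

lemma exists_preimage_small [DecidableEq K] (hna : ∀ x y : K, ‖x + y‖ ≤ max ‖x‖ ‖y‖)
    {V : Finset K} (h0 : (0:K) ∈ V)
    (hadd : ∀ a ∈ V, ∀ b ∈ V, a + b ∈ V) (hneg : ∀ a ∈ V, -a ∈ V) (z : K) :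
    ∃ w : K, ‖w‖ ≤ ‖z‖ ∧ w * ∏ v ∈ V.erase 0, (1 - w * v⁻¹) = z := by
  set f := latticePoly V with hfdef
  have hmon : f.Monic := latticePoly_monic V
  have hN : 1 ≤ V.card := Finset.card_pos.2 ⟨0, h0⟩
  set cV : K := ∏ v ∈ V.erase 0, (-v⁻¹) with hcVdef
  have hcV : cV ≠ 0 := by
    rw [hcVdef]
    refine Finset.prod_ne_zero_iff.2 fun v hv => ?_
    have := (Finset.mem_erase.1 hv).1
    simp [this]
  have hkey : ∀ w : K, w * ∏ v ∈ V.erase 0, (1 - w * v⁻¹) = cV * f.eval w := by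
    intro w
    rw [hfdef, hcVdef]
    exact lattice_prod_eq h0 w
  set z' : K := z / cV with hz'def
  have hdegf : f.degree = (V.card : WithBot ℕ) := by
    rw [degree_eq_natDegree hmon.ne_zero, latticePoly_natDegree]
  have hCdeg : (C z' : K[X]).degree < f.degree := by
    refine lt_of_le_of_lt degree_C_le ?_
    rw [hdegf]; exact_mod_cast hN
  have hdeg : (f - C z').degree ≠ 0 := by
    rw [degree_sub_eq_left_of_degree_lt hCdeg, hdegf]
    intro hcon
    have : V.card = 0 := by exact_mod_cast hcon
    omega
  obtain ⟨b, hb⟩ := IsAlgClosed.exists_root (f - C z') hdeg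
  have hfb : f.eval b = z' := by
    have := hb
    simp only [IsRoot, eval_sub, eval_C] at this
    linear_combination this
  obtain ⟨v₀, hv₀, hmin⟩ := Finset.exists_min_image V (fun v => ‖b + v‖) ⟨0, h0⟩
  set b' : K := b + v₀ with hb'def
  have hcoset : ∀ v ∈ V, f.eval (b' + v) = z' := by
    intro v hv
    have : b' + v = b + (v₀ + v) := by rw [hb'def]; ring
    rw [this, latticePoly_shift h0 hadd hneg b (hadd _ hv₀ _ hv), hfb]
  set W' : Finset K := V.image (fun v => b' + v) with hW'def
  have hinjOn : ∀ x ∈ V, ∀ y ∈ V, b' + x = b' + y → x = y := fun a _ c _ h => by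
    simpa using h
  have hcardW' : W'.card = V.card := Finset.card_image_of_injOn fun a ha c hc h =>
    hinjOn a ha c hc h
  have hfact : f - C z' = latticePoly W' := by
    set D : K[X] := (f - C z') - latticePoly W' with hDdef
    have hroots : ∀ u ∈ W', D.eval u = 0 := by
      intro u hu
      obtain ⟨v, hv, rfl⟩ := Finset.mem_image.1 hu
      simp only [hDdef, eval_sub, eval_C]
      rw [hcoset v hv, latticePoly_root W' hu]
      ring
    have hDz : D = 0 := by
      by_cases hc : D = 0
      · exact hc
      refine eq_zero_of_natDegree_lt_card_of_eval_eq_zero' D W' hroots ?_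
      rw [natDegree_lt_iff_degree_lt hc, hcardW']
      have hmon1 : (f - C z').Monic := hmon.sub_of_left hCdeg
      have hmon2 : (latticePoly W').Monic := latticePoly_monic W'
      have hdeq : (f - C z').degree = (latticePoly W').degree := by
        rw [degree_sub_eq_left_of_degree_lt hCdeg, hdegf,
          degree_eq_natDegree hmon2.ne_zero, latticePoly_natDegree, hcardW']
      have hlt := degree_sub_lt hdeq hmon1.ne_zero
        (by rw [hmon1.leadingCoeff, hmon2.leadingCoeff])
      rw [hDdef]
      refine lt_of_lt_of_le hlt ?_
      rw [degree_sub_eq_left_of_degree_lt hCdeg, hdegf]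
    have := hDz
    rw [hDdef, sub_eq_zero] at this
    exact this
  have hprod_norm : ‖z'‖ = ∏ v ∈ V, ‖b' + v‖ := by
    have h00 := congrArg (Polynomial.eval 0) hfact
    simp only [eval_sub, eval_C] at h00
    rw [show f.eval 0 = 0 from latticePoly_root V h0, latticePoly_eval] at h00
    have h1 : -z' = ∏ u ∈ W', (0 - u) := by linear_combination h00
    have h2 : ‖z'‖ = ∏ u ∈ W', ‖u‖ := by
      have := congrArg norm h1
      rw [norm_neg, norm_prod] at this
      rw [this]
      exact Finset.prod_congr rfl fun u _ => by rw [zero_sub, norm_neg]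
    rw [h2, hW'def, Finset.prod_image hinjOn]
  have hlower : ‖b'‖ * ∏ v ∈ V.erase 0, ‖v‖ ≤ ∏ v ∈ V, ‖b' + v‖ := by
    rw [← Finset.mul_prod_erase V (fun v => ‖b' + v‖) h0, add_zero]
    refine mul_le_mul_of_nonneg_left ?_ (norm_nonneg _)
    refine Finset.prod_le_prod (fun v _ => norm_nonneg _) fun v hv => ?_
    have hvV : v ∈ V := (Finset.mem_erase.1 hv).2
    rcases le_or_gt ‖v‖ ‖b'‖ with hle | hlt
    · refine hle.trans ?_
      have : b' + v = b + (v₀ + v) := by rw [hb'def]; ring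
      rw [this]
      exact hmin _ (hadd _ hv₀ _ hvV)
    · exact (hna_add_eq hna hlt).ge
  have hPpos : 0 < ∏ v ∈ V.erase 0, ‖v‖ := by
    refine Finset.prod_pos fun v hv => norm_pos_iff.2 (Finset.mem_erase.1 hv).1
  have hz'norm : ‖z'‖ = ‖z‖ * ∏ v ∈ V.erase 0, ‖v‖ := by
    rw [hz'def, norm_div, hcVdef, norm_prod]
    have : ∏ v ∈ V.erase 0, ‖-v⁻¹‖ = (∏ v ∈ V.erase 0, ‖v‖)⁻¹ := by
      rw [← Finset.prod_inv_distrib]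
      exact Finset.prod_congr rfl fun v _ => by rw [norm_neg, norm_inv]
    rw [this, div_eq_mul_inv, inv_inv]
  have hble : ‖b'‖ ≤ ‖z‖ := by
    have : ‖b'‖ * ∏ v ∈ V.erase 0, ‖v‖ ≤ ‖z‖ * ∏ v ∈ V.erase 0, ‖v‖ := by
      rw [← hz'norm]
      exact hlower.trans_eq hprod_norm.symm
    exact le_of_mul_le_mul_right this hPpos
  refine ⟨b', hble, ?_⟩
  rw [hkey b', show f.eval b' = z' from by simpa using hcoset 0 h0, hz'def]
  field_simp

end RootLemma


section UltraSum
variable {K : Type*} [NormedField K] {ι : Type*}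

lemma sum_norm_le (hna : ∀ x y : K, ‖x + y‖ ≤ max ‖x‖ ‖y‖)
    (s : Finset ι) (f : ι → K) {B : ℝ} (hB : 0 ≤ B) (h : ∀ i ∈ s, ‖f i‖ ≤ B) :
    ‖∑ i ∈ s, f i‖ ≤ B := by
  classical
  induction s using Finset.induction_on with
  | empty => simpa
  | @insert a s ha ih =>
    rw [Finset.sum_insert ha]
    exact (hna _ _).trans (max_le (h a (Finset.mem_insert_self a s))
      (ih fun i hi => h i (Finset.mem_insert_of_mem hi)))

end UltraSum



/-- **The lattice exponential function.** Let `K` model `ℂ_∞` (complete, algebraically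
closed, nonarchimedean) and let `Λ ⊆ K` be a finitely generated `A = 𝔽_q[θ]`-submodule
(the `A`-action coming from an algebra structure `𝔽_q[θ] → K`) that is discrete: every
bounded set meets `Λ` in a finite set.  Then the product
`e_Λ(w) = w ∏_{0 ≠ λ ∈ Λ} (1 - w/λ)` converges for every `w`, and defines an
`𝔽_q`-linear surjective function `e_Λ : K → K` with kernel exactly `Λ`. -/
theorem lattice_exponential_exists
    {Fq K : Type*} [Field Fq] [Fintype Fq] [NontriviallyNormedField K]
    [CompleteSpace K] [IsAlgClosed K]
    (hna : ∀ x y : K, ‖x + y‖ ≤ max ‖x‖ ‖y‖)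
    [Algebra Fq K] [Algebra (Polynomial Fq) K] [IsScalarTower Fq (Polynomial Fq) K]
    (Λ : Submodule (Polynomial Fq) K) (hfg : Λ.FG)
    (hdisc : ∀ M : ℝ, {x : K | x ∈ Λ ∧ ‖x‖ ≤ M}.Finite) :
    ∃ e P : K → K,
      (∀ w, e w = w * P w) ∧
      (∀ w, HasProd (fun l : {x : K // x ∈ Λ ∧ x ≠ 0} => 1 - w * (l : K)⁻¹) (P w)) ∧
      (∀ x y, e (x + y) = e x + e y) ∧
      (∀ (c : Fq) (x : K), e (algebraMap Fq K c * x) = algebraMap Fq K c * e x) ∧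
      Function.Surjective e ∧
      (∀ x, e x = 0 ↔ x ∈ Λ) := by
  classical
  set S := {x : K // x ∈ Λ ∧ x ≠ 0} with hSdef
  set F : K → S → K := fun w l => 1 - w * (l : K)⁻¹ with hFdef
  -- basic norm computation for factors
  have hFnorm : ∀ w : K, ∀ l : S, ‖F w l - 1‖ = ‖w‖ * ‖(l : K)‖⁻¹ := by
    intro w l
    have : F w l - 1 = -(w * (l : K)⁻¹) := by rw [hFdef]; ring
    rw [this, norm_neg, norm_mul, norm_inv]
  -- finiteness of large factors
  have hfin : ∀ w : K, ∀ ε : ℝ, 0 < ε → {l : S | ε ≤ ‖F w l - 1‖}.Finite := by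
    intro w ε hε
    have hsub : {l : S | ε ≤ ‖F w l - 1‖} ⊆
        Subtype.val ⁻¹' {x : K | x ∈ Λ ∧ ‖x‖ ≤ ‖w‖ / ε} := by
      intro l hl
      simp only [Set.mem_setOf_eq] at hl
      rw [hFnorm] at hl
      refine ⟨l.2.1, ?_⟩
      have hlpos : 0 < ‖(l : K)‖ := norm_pos_iff.2 l.2.2
      rw [le_div_iff₀ hε]
      calc ‖(l : K)‖ * ε ≤ ‖(l : K)‖ * (‖w‖ * ‖(l : K)‖⁻¹) := by
            exact mul_le_mul_of_nonneg_left hl hlpos.le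
        _ = ‖w‖ := by field_simp
    exact Set.Finite.subset ((hdisc (‖w‖ / ε)).preimage Subtype.val_injective.injOn) hsub
  have hmul : ∀ w : K, Multipliable (F w) := fun w =>
    multipliable_of_norm_sub_one hna (hfin w)
  set P : K → K := fun w => ∏' l, F w l with hPdef
  set e : K → K := fun w => w * P w with hedef
  have htend : ∀ w : K, Tendsto (fun s : Finset S => w * ∏ l ∈ s, F w l) atTop (𝓝 (e w)) :=
    fun w => (hmul w).hasProd.const_mul w
  -- good finsets coming from finite 𝔽q-submodules
  have hgood : ∀ A : Set K, A.Finite → A ⊆ (Λ : Set K) →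
      ∃ (V : Finset K) (t : Finset S),
        (0:K) ∈ V ∧ (∀ a ∈ V, ∀ b ∈ V, a + b ∈ V) ∧ (∀ a ∈ V, -a ∈ V) ∧
        (∀ (c : Fq), ∀ a ∈ V, algebraMap Fq K c * a ∈ V) ∧
        (↑V ⊆ (Λ : Set K)) ∧ A ⊆ ↑V ∧ (∃ n : ℕ, V.card = Fintype.card Fq ^ n) ∧
        (∀ l : S, l ∈ t ↔ (l : K) ∈ V) ∧
        (∀ w : K, ∏ l ∈ t, F w l = ∏ v ∈ V.erase 0, (1 - w * v⁻¹)) := by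
    intro A hA hAΛ
    set W : Submodule Fq K := Submodule.span Fq A with hWdef
    have hWle : W ≤ Λ.restrictScalars Fq := Submodule.span_le.2 hAΛ
    have hMF : Module.Finite Fq W := Module.Finite.span_of_finite Fq hA
    have hWfinite : Finite W := Module.finite_of_finite Fq
    have hWfin : (W : Set K).Finite := Set.toFinite _
    set V : Finset K := hWfin.toFinset with hVdef
    have hmemV : ∀ x : K, x ∈ V ↔ x ∈ W := fun x => Set.Finite.mem_toFinset _
    have hcard : ∃ n : ℕ, V.card = Fintype.card Fq ^ n := by
      have : Fintype W := Fintype.ofFinite _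
      obtain ⟨n, hn⟩ := VectorSpace.card_fintype Fq (V := W)
      refine ⟨n, ?_⟩
      rw [← hn]
      rw [hVdef, Set.Finite.card_toFinset]
      exact Set.toFinset_card (W : Set K) ▸ rfl
    set t : Finset S := (V.erase 0).attach.image
      (fun v => (⟨v.1, by
        have hv := v.2
        rw [Finset.mem_erase, hmemV] at hv
        exact ⟨hWle hv.2, hv.1⟩⟩ : S)) with htdef
    have hmemt : ∀ l : S, l ∈ t ↔ (l : K) ∈ V := by
      intro l
      constructor
      · intro hl
        rw [htdef] at hl
        obtain ⟨v, _, rfl⟩ := Finset.mem_image.1 hl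
        have hv := v.2
        rw [Finset.mem_erase] at hv
        exact hv.2
      · intro hl
        rw [htdef]
        refine Finset.mem_image.2 ⟨⟨l.1, Finset.mem_erase.2 ⟨l.2.2, hl⟩⟩,
          Finset.mem_attach _ _, rfl⟩
    refine ⟨V, t, ?_, ?_, ?_, ?_, ?_, ?_, hcard, hmemt, ?_⟩
    · rw [hmemV]; exact W.zero_mem
    · intro a ha b hb; rw [hmemV] at *; exact W.add_mem ha hb
    · intro a ha; rw [hmemV] at *; exact W.neg_mem ha
    · intro c a ha
      rw [hmemV] at *
      have : algebraMap Fq K c * a = c • a := (Algebra.smul_def c a).symm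
      rw [this]
      exact W.smul_mem c ha
    · intro x hx
      rw [Finset.mem_coe, hmemV] at hx
      exact hWle hx
    · intro x hx
      rw [Finset.mem_coe, hmemV]
      exact Submodule.subset_span hx
    · intro w
      rw [htdef]
      rw [Finset.prod_image (by
        intro a _ b _ h
        have : (a.1 : K) = b.1 := congrArg (Subtype.val : S → K) h
        exact Subtype.ext this)]
      rw [← Finset.prod_attach (V.erase 0) (fun v => 1 - w * v⁻¹)]
      try rfl

  have hzero_e : e 0 = 0 := by simp [hedef]
  have hadd_e : ∀ x y : K, e (x + y) = e x + e y := by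
    intro x y
    have htt : Tendsto (fun s : Finset S =>
        ((x + y) * ∏ l ∈ s, F (x + y) l) - (x * ∏ l ∈ s, F x l) - (y * ∏ l ∈ s, F y l))
        atTop (𝓝 (e (x + y) - e x - e y)) :=
      ((htend (x + y)).sub (htend x)).sub (htend y)
    have hfreq : ∃ᶠ s in (atTop : Filter (Finset S)),
        ((x + y) * ∏ l ∈ s, F (x + y) l) - (x * ∏ l ∈ s, F x l) - (y * ∏ l ∈ s, F y l)
          ∈ ({0} : Set K) := by
      rw [Filter.frequently_atTop]
      intro s
      obtain ⟨V, t, h0V, haddV, hnegV, hsmulV, hVΛ, hAV, _, hmemt, hFt⟩ :=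
        hgood ((Subtype.val (p := fun x : K => x ∈ Λ ∧ x ≠ 0)) '' ↑s) (Set.Finite.image _ (Finset.finite_toSet s))
          (by rintro _ ⟨l, _, rfl⟩; exact l.2.1)
      have hst : s ≤ t := by
        intro l hl
        exact (hmemt l).2 (hAV ⟨l, hl, rfl⟩)
      refine ⟨t, hst, ?_⟩
      rw [Set.mem_singleton_iff, hFt, hFt, hFt,
        lattice_prod_eq h0V, lattice_prod_eq h0V, lattice_prod_eq h0V,
        latticePoly_map_add h0V haddV hnegV x y]
      ring
    have hmem := mem_closure_of_frequently_of_tendsto hfreq htt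
    rw [closure_singleton, Set.mem_singleton_iff] at hmem
    linear_combination hmem
  have hsmul_e : ∀ (c : Fq) (x : K), e (algebraMap Fq K c * x) = algebraMap Fq K c * e x := by
    intro c x
    by_cases hc : c = 0
    · subst hc
      simp [hzero_e]
    · set c' : K := algebraMap Fq K c with hc'def
      have hc' : c' ≠ 0 := by
        intro h
        exact hc ((algebraMap Fq K).injective (by rw [← hc'def, h, map_zero]))
      have hpowq : c' ^ (Fintype.card Fq) = c' := by
        rw [hc'def, ← map_pow, FiniteField.pow_card]
      have hpowN : ∀ n : ℕ, c' ^ (Fintype.card Fq ^ n) = c' := by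
        intro n
        induction n with
        | zero => simp
        | succ n ih => rw [pow_succ, pow_mul, ih, hpowq]
      have htt : Tendsto (fun s : Finset S =>
          ((c' * x) * ∏ l ∈ s, F (c' * x) l) - c' * (x * ∏ l ∈ s, F x l))
          atTop (𝓝 (e (c' * x) - c' * e x)) :=
        (htend (c' * x)).sub ((htend x).const_mul c')
      have hfreq : ∃ᶠ s in (atTop : Filter (Finset S)),
          ((c' * x) * ∏ l ∈ s, F (c' * x) l) - c' * (x * ∏ l ∈ s, F x l)
            ∈ ({0} : Set K) := by
        rw [Filter.frequently_atTop]
        intro s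
        obtain ⟨V, t, h0V, haddV, hnegV, hsmulV, hVΛ, hAV, hcardV, hmemt, hFt⟩ :=
          hgood ((Subtype.val (p := fun x : K => x ∈ Λ ∧ x ≠ 0)) '' ↑s) (Set.Finite.image _ (Finset.finite_toSet s))
            (by rintro _ ⟨l, _, rfl⟩; exact l.2.1)
        have hst : s ≤ t := by
          intro l hl
          exact (hmemt l).2 (hAV ⟨l, hl, rfl⟩)
        refine ⟨t, hst, ?_⟩
        obtain ⟨n, hn⟩ := hcardV
        rw [Set.mem_singleton_iff, hFt, hFt,
          lattice_prod_eq h0V, lattice_prod_eq h0V,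
          latticePoly_map_smul h0V haddV hnegV hc' (fun a ha => hsmulV c a ha) x,
          hn, hpowN n]
        ring
      have hmem := mem_closure_of_frequently_of_tendsto hfreq htt
      rw [closure_singleton, Set.mem_singleton_iff] at hmem
      linear_combination hmem
  have hker : ∀ x : K, e x = 0 ↔ x ∈ Λ := by
    intro x
    constructor
    · intro hex
      by_contra hxΛ
      have hx0 : x ≠ 0 := fun h => hxΛ (h ▸ Λ.zero_mem)
      set T : Finset S := (hfin x (1/2) (by norm_num)).toFinset with hTdef
      have hfinmul : Multipliable ((F x) ∘ (Subtype.val) : ↑(↑T : Set S) → K) :=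
        ⟨_, hasProd_fintype _⟩
      have hcmul : Multipliable ((F x) ∘ (Subtype.val) : ↑(↑T : Set S)ᶜ → K) := by
        refine multipliable_of_norm_sub_one hna ?_
        intro ε hε
        have := (hfin x ε hε).preimage (f := (Subtype.val : ↑(↑T : Set S)ᶜ → S))
          Subtype.val_injective.injOn
        exact this
      have hsplit := Multipliable.tprod_mul_tprod_compl (f := F x) hfinmul hcmul
      have hT0 : (∏' l : ↑(↑T : Set S), F x l) ≠ 0 := by
        rw [Finset.tprod_subtype']
        refine Finset.prod_ne_zero_iff.2 fun l _ => ?_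
        intro hFl
        have : x * (l : K)⁻¹ = 1 := by
          have := hFl
          rw [hFdef] at this
          simp only at this
          linear_combination -this
        have hxl : x = (l : K) := by
          field_simp at this
          rwa [div_eq_one_iff_eq (by exact l.2.2 : (l:K) ≠ 0)] at this
        exact hxΛ (hxl ▸ l.2.1)
      have hQ0 : (∏' l : ↑(↑T : Set S)ᶜ, F x l) ≠ 0 := by
        have hb : ‖(∏' l : ↑(↑T : Set S)ᶜ, F x l) - 1‖ ≤ 1/2 := by
          refine norm_tprod_sub_one_le hna hcmul (by norm_num) (by norm_num) ?_
          intro l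
          have hl := l.2
          simp only [Set.mem_compl_iff, Finset.mem_coe, hTdef,
            Set.Finite.mem_toFinset, Set.mem_setOf_eq, not_le] at hl
          exact le_of_lt hl
        intro h0
        rw [h0] at hb
        norm_num at hb
      have : P x ≠ 0 := by
        rw [hPdef]
        simp only
        rw [← hsplit]
        exact mul_ne_zero hT0 hQ0
      exact this (by
        have : x * P x = 0 := hex
        rcases mul_eq_zero.1 this with h | h
        · exact absurd h hx0
        · exact h)
    · intro hxΛ
      by_cases hx0 : x = 0
      · rw [hx0]; exact hzero_e
      · have hF0 : F x ⟨x, hxΛ, hx0⟩ = 0 := by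
          rw [hFdef]
          simp only
          rw [mul_inv_cancel₀ hx0]
          ring
        have hprod0 : HasProd (F x) 0 := by
          have hev : ∀ᶠ s : Finset S in atTop, (∏ l ∈ s, F x l) = (0:K) := by
            filter_upwards [Filter.eventually_ge_atTop ({⟨x, hxΛ, hx0⟩} : Finset S)] with s hs
            exact Finset.prod_eq_zero (hs (Finset.mem_singleton_self _)) hF0
          have : Tendsto (fun _ : Finset S => (0:K)) atTop (𝓝 0) := tendsto_const_nhds
          exact this.congr' (hev.mono fun s h => h.symm)
        have hPx : P x = 0 := hprod0.tprod_eq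
        rw [hedef]
        simp only
        rw [hPx, mul_zero]
  have hminnorm : ∃ m : ℝ, 0 < m ∧ m ≤ 1 ∧ ∀ l : K, l ∈ Λ → l ≠ 0 → m ≤ ‖l‖ := by
    set F1 : Finset K := ((hdisc 1).toFinset.erase 0) with hF1
    by_cases hF1e : F1.Nonempty
    · set N : Finset ℝ := F1.image norm with hNdef
      have hNne : N.Nonempty := hF1e.image _
      refine ⟨min (N.min' hNne) 1, ?_, min_le_right _ _, ?_⟩
      · refine lt_min ?_ one_pos
        obtain ⟨l, hlF, hln⟩ := Finset.mem_image.1 (N.min'_mem hNne)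
        rw [← hln]
        exact norm_pos_iff.2 (Finset.mem_erase.1 hlF).1
      · intro l hlΛ hl0
        by_cases h1 : ‖l‖ ≤ 1
        · have hmem : l ∈ F1 := Finset.mem_erase.2
            ⟨hl0, (Set.Finite.mem_toFinset _).2 ⟨hlΛ, h1⟩⟩
          exact (min_le_left _ _).trans (N.min'_le _ (Finset.mem_image_of_mem _ hmem))
        · push_neg at h1
          exact (min_le_right _ _).trans h1.le
    · refine ⟨1, one_pos, le_rfl, ?_⟩
      intro l hlΛ hl0
      by_contra h
      push_neg at h
      exact hF1e ⟨l, Finset.mem_erase.2 ⟨hl0, (Set.Finite.mem_toFinset _).2 ⟨hlΛ, h.le⟩⟩⟩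
  obtain ⟨m, hm0, hm1, hmle⟩ := hminnorm
  have hsmall : ∀ u : K, ‖u‖ ≤ m → ‖e u‖ ≤ ‖u‖ := by
    intro u hu
    have hPu : ‖P u‖ ≤ 1 := by
      refine norm_tprod_le_one hna (hmul u) (zero_le_one) (le_refl (1:ℝ)) ?_
      intro l
      rw [hFnorm, ← div_eq_mul_inv, div_le_one (norm_pos_iff.2 l.2.2)]
      exact hu.trans (hmle l l.2.1 l.2.2)
    calc ‖e u‖ = ‖u‖ * ‖P u‖ := by rw [hedef]; simp only; rw [norm_mul]
      _ ≤ ‖u‖ * 1 := mul_le_mul_of_nonneg_left hPu (norm_nonneg u)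
      _ = ‖u‖ := mul_one _
  have hstep : ∀ z' : K, ∃ w : K, ‖w‖ ≤ ‖z'‖ ∧ ‖e w - z'‖ ≤ ‖z'‖ / 2 := by
    intro z'
    by_cases hz' : z' = 0
    · exact ⟨0, by simp [hz'], by simp [hz', hzero_e]⟩
    obtain ⟨V, t, h0V, haddV, hnegV, hsmulV, hVΛ, hAV, _, hmemt, hFt⟩ :=
      hgood {x : K | x ∈ Λ ∧ ‖x‖ ≤ 2 * ‖z'‖} (hdisc _) (fun x hx => hx.1)
    obtain ⟨w, hwle, hwprod⟩ := exists_preimage_small hna h0V haddV hnegV z'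
    have hfinmul : Multipliable ((F w) ∘ Subtype.val : ↑(↑t : Set S) → K) :=
      ⟨_, hasProd_fintype _⟩
    have hcmul : Multipliable ((F w) ∘ Subtype.val : ↑(↑t : Set S)ᶜ → K) := by
      refine multipliable_of_norm_sub_one hna ?_
      intro ε hε
      have := (hfin w ε hε).preimage (f := (Subtype.val : ↑(↑t : Set S)ᶜ → S))
        Subtype.val_injective.injOn
      exact this
    have hsplit := Multipliable.tprod_mul_tprod_compl (f := F w) hfinmul hcmul
    have hQb : ‖(∏' l : ↑(↑t : Set S)ᶜ, F w (l : S)) - 1‖ ≤ 1/2 := by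
      refine norm_tprod_sub_one_le hna hcmul (by norm_num) (by norm_num) ?_
      intro l
      have hlV : ((l : S) : K) ∉ V := by
        intro hcon
        exact l.2 (Finset.mem_coe.2 ((hmemt l.1).2 hcon))
      have hlnorm : 2 * ‖z'‖ < ‖((l : S) : K)‖ := by
        by_contra hcon
        push_neg at hcon
        exact hlV (Finset.mem_coe.1 (hAV ⟨(l.1).2.1, hcon⟩))
      show ‖F w l.1 - 1‖ ≤ 1/2
      rw [hFnorm, ← div_eq_mul_inv]
      have hz'pos : 0 < ‖z'‖ := norm_pos_iff.2 hz'
      have hlpos : 0 < ‖((l : S) : K)‖ := by linarith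
      rw [div_le_div_iff₀ hlpos (by norm_num : (0:ℝ) < 2)]
      nlinarith [hwle]
    have hew : e w = z' * ∏' l : ↑(↑t : Set S)ᶜ, F w (l : S) := by
      rw [hedef]
      simp only
      rw [hPdef]
      simp only
      rw [← hsplit, Finset.tprod_subtype', ← mul_assoc,
        show w * ∏ l ∈ t, F w l = z' from by rw [hFt]; exact hwprod]
    refine ⟨w, hwle, ?_⟩
    rw [hew]
    have heq2 : z' * (∏' l : ↑(↑t : Set S)ᶜ, F w (l : S)) - z'
        = z' * ((∏' l : ↑(↑t : Set S)ᶜ, F w (l : S)) - 1) := by ring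
    rw [heq2, norm_mul]
    calc ‖z'‖ * ‖(∏' l : ↑(↑t : Set S)ᶜ, F w (l : S)) - 1‖ ≤ ‖z'‖ * (1/2) :=
      mul_le_mul_of_nonneg_left hQb (norm_nonneg _)
      _ = ‖z'‖ / 2 := by ring
  have hsurj : Function.Surjective e := by
    intro z
    choose step hstep1 hstep2 using hstep
    set zs : ℕ → K := fun k => Nat.rec z (fun _ zk => zk - e (step zk)) k with hzs
    have hzs0 : zs 0 = z := rfl
    have hzsS : ∀ k, zs (k+1) = zs k - e (step (zs k)) := fun k => rfl
    have hzb : ∀ k, ‖zs k‖ ≤ ‖z‖ / 2 ^ k := by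
      intro k
      induction k with
      | zero => simp [hzs0]
      | succ k ih =>
        rw [hzsS k]
        calc ‖zs k - e (step (zs k))‖ = ‖e (step (zs k)) - zs k‖ := norm_sub_rev _ _
          _ ≤ ‖zs k‖ / 2 := hstep2 (zs k)
          _ ≤ (‖z‖ / 2 ^ k) / 2 := by linarith
          _ = ‖z‖ / 2 ^ (k+1) := by rw [pow_succ]; ring
    have hwb : ∀ k, ‖step (zs k)‖ ≤ ‖z‖ / 2 ^ k := fun k => (hstep1 (zs k)).trans (hzb k)
    set ss : ℕ → K := fun n => ∑ k ∈ Finset.range n, step (zs k) with hss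
    have hdiffb : ∀ N n : ℕ, N ≤ n → ‖ss n - ss N‖ ≤ ‖z‖ / 2 ^ N := by
      intro N n hNn
      have hIco : ss n - ss N = ∑ k ∈ Finset.Ico N n, step (zs k) := by
        rw [hss]
        simp only
        rw [Finset.sum_Ico_eq_sub _ hNn]
      rw [hIco]
      refine sum_norm_le hna _ _ (by positivity) ?_
      intro k hk
      have hkN : N ≤ k := (Finset.mem_Ico.1 hk).1
      refine (hwb k).trans ?_
      have h2 : (2:ℝ) ^ N ≤ 2 ^ k := pow_le_pow_right₀ one_le_two hkN
      gcongr
    have hzdecay : ∀ ε : ℝ, 0 < ε → ∃ N : ℕ, ‖z‖ / 2 ^ N < ε := by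
      intro ε hε
      have hz1 : (0:ℝ) < ‖z‖ + 1 := by positivity
      obtain ⟨N, hN⟩ := exists_pow_lt_of_lt_one
        (show (0:ℝ) < ε / (‖z‖ + 1) by positivity)
        (by norm_num : (1:ℝ)/2 < 1)
      refine ⟨N, ?_⟩
      have hpow : ((1:ℝ)/2) ^ N = 1 / 2 ^ N := by rw [div_pow, one_pow]
      have hstepA : ‖z‖ / 2 ^ N ≤ (‖z‖ + 1) / 2 ^ N := by gcongr; linarith
      have hstepB : (‖z‖ + 1) / 2 ^ N = (‖z‖ + 1) * ((1:ℝ)/2) ^ N := by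
        rw [hpow, mul_one_div]
      have hstepC : (‖z‖ + 1) * ((1:ℝ)/2) ^ N < (‖z‖ + 1) * (ε / (‖z‖ + 1)) :=
        mul_lt_mul_of_pos_left hN hz1
      have hstepD : (‖z‖ + 1) * (ε / (‖z‖ + 1)) = ε := by field_simp
      linarith [hstepA, hstepB ▸ hstepA]
    have hcauchy : CauchySeq ss := by
      rw [Metric.cauchySeq_iff']
      intro ε hε
      obtain ⟨N, hN⟩ := hzdecay ε hε
      refine ⟨N, fun n hn => ?_⟩
      rw [dist_eq_norm]
      exact lt_of_le_of_lt (hdiffb N n hn) hN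
    obtain ⟨w, hwlim⟩ := cauchySeq_tendsto_of_complete hcauchy
    have hess : ∀ n, e (ss n) = z - zs n := by
      intro n
      induction n with
      | zero =>
        rw [show ss 0 = 0 from by simp [hss], hzero_e, hzs0]
        ring
      | succ n ih =>
        have hsucc : ss (n+1) = ss n + step (zs n) := by
          rw [hss]
          simp only
          rw [Finset.sum_range_succ]
        rw [hsucc, hadd_e, ih]
        have he : e (step (zs n)) = zs n - zs (n+1) := by rw [hzsS n]; ring
        rw [he]
        ring
    have hwdist : ∀ N, ‖w - ss N‖ ≤ ‖z‖ / 2 ^ N := by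
      intro N
      have hT : Tendsto (fun n => ‖ss n - ss N‖) atTop (𝓝 ‖w - ss N‖) :=
        (hwlim.sub_const (ss N)).norm
      refine le_of_tendsto hT ?_
      filter_upwards [Filter.eventually_ge_atTop N] with n hn
      exact hdiffb N n hn
    refine ⟨w, ?_⟩
    by_contra hne
    have hpos : 0 < ‖e w - z‖ := by
      rw [norm_pos_iff, sub_ne_zero]
      exact hne
    obtain ⟨N, hN⟩ := hzdecay (min ‖e w - z‖ m) (lt_min hpos hm0)
    have h1 : ‖w - ss N‖ ≤ m :=
      (hwdist N).trans (le_of_lt (lt_of_lt_of_le hN (min_le_right _ _)))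
    have h2 : e w - e (ss N) = e (w - ss N) := by
      have := hadd_e (w - ss N) (ss N)
      rw [sub_add_cancel] at this
      linear_combination this
    have h3 : ‖e w - z‖ ≤ max ‖e w - e (ss N)‖ ‖e (ss N) - z‖ := by
      have heq3 : e w - z = (e w - e (ss N)) + (e (ss N) - z) := by ring
      rw [heq3]
      exact hna _ _
    have h4 : ‖e w - e (ss N)‖ ≤ ‖z‖ / 2 ^ N := by
      rw [h2]
      exact (hsmall _ h1).trans (hwdist N)
    have h5 : ‖e (ss N) - z‖ ≤ ‖z‖ / 2 ^ N := by
      rw [hess N, show z - zs N - z = -(zs N) from by ring, norm_neg]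
      exact hzb N
    have h6 : ‖e w - z‖ ≤ ‖z‖ / 2 ^ N := h3.trans (max_le h4 h5)
    have h7 : ‖z‖ / 2 ^ N < ‖e w - z‖ := lt_of_lt_of_le hN (min_le_left _ _)
    linarith
  exact ⟨e, P, fun w => rfl, fun w => (hmul w).hasProd, hadd_e, hsmul_e, hsurj, hker⟩
end

section
/- Let z ∈ Ω^r ⊂ C_∞^r with z_1 = 1, and suppose |z|_ℑ ≥ q^{−n}|z| for some n ≥ 0, where |z| = max_i |z_i| and |z|_ℑ = inf_H |ℓ_H(z)| over normalized K_∞-rational hyperplane forms ℓ_H. Then for every nonzero a ∈ A^r, |z·a| ≥ q^{−n}·|a|, where |a| = max_i |a_i|. Consequently, for any k ≥ 1, the series Σ'_{a ∈ A^r} (z·a)^{−k} (sum over nonzero a) converges in C_∞. -/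
open Filter

/-- Polynomials of bounded degree over a finite field form a finite set. -/
lemma finite_natDegree_le {Fq : Type*} [Field Fq] [Fintype Fq] (D : ℕ) :
    {p : Polynomial Fq | p.natDegree ≤ D}.Finite := by
  rw [← Set.finite_coe_iff]
  have hinj : Function.Injective (fun p : {p : Polynomial Fq | p.natDegree ≤ D} =>
      (fun i : Fin (D + 1) => (p : Polynomial Fq).coeff i)) := by
    intro p q h
    ext n
    rcases le_or_gt n D with hn | hn
    · exact congrFun h ⟨n, Nat.lt_succ_of_le hn⟩
    · rw [Polynomial.coeff_eq_zero_of_natDegree_lt (lt_of_le_of_lt p.2 hn),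
        Polynomial.coeff_eq_zero_of_natDegree_lt (lt_of_le_of_lt q.2 hn)]
  exact Finite.of_injective _ hinj

/-- Ultrametric bound for finite sums. -/
lemma norm_sum_lt_of_ultra {K : Type*} [NormedField K]
    (hna : ∀ x y : K, ‖x + y‖ ≤ max ‖x‖ ‖y‖) {ι : Type*} (f : ι → K) {ε : ℝ} (hε : 0 < ε)
    (t : Finset ι) (h : ∀ i ∈ t, ‖f i‖ < ε) : ‖∑ i ∈ t, f i‖ < ε := by
  classical
  induction t using Finset.induction_on with
  | empty => simpa using hε
  | @insert a s hx ih =>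
    rw [Finset.sum_insert hx]
    refine lt_of_le_of_lt (hna _ _) (max_lt (h a (Finset.mem_insert_self a s)) ?_)
    exact ih fun i hi => h i (Finset.mem_insert_of_mem hi)

/-- **Estimate on `|z·a|` on the affinoid `Ω_n` and convergence of Eisenstein sums.**
Let `F ⊆ K` be a subfield (modelling `K_∞ ⊆ ℂ_∞`) containing the image of
`A = 𝔽_q[θ]` under `ι`, with `‖ι(a)‖ = q^{deg a}` for `a ≠ 0`.  Suppose
`z = (z_r, …, z₁)`, `z₁ = 1`, satisfies `|z|_ℑ ≥ q^{-n}|z|`, i.e. every normalized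
`K_∞`-rational hyperplane form `η` (all `‖η_i‖ ≤ 1`, some `‖η_j‖ = 1`) has
`‖Σ z_i η_i‖ ≥ q^{-n} · max_i ‖z_i‖`.  Then `‖z·a‖ ≥ q^{-n} · max_i ‖a_i‖` for every
nonzero `a ∈ A^r`, and for every `k ≥ 1` the series `Σ'_{a ≠ 0} (z·a)^{-k}` converges. -/
theorem eisenstein_estimate_and_convergence
    {Fq K : Type*} [Field Fq] [Fintype Fq] [NontriviallyNormedField K] [CompleteSpace K]
    (hna : ∀ x y : K, ‖x + y‖ ≤ max ‖x‖ ‖y‖)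
    (F : Subfield K) (ι : Polynomial Fq →+* K) (hrange : ∀ p : Polynomial Fq, ι p ∈ F)
    (q : ℕ) (hq : 1 < q)
    (hdeg : ∀ p : Polynomial Fq, p ≠ 0 → ‖ι p‖ = (q : ℝ) ^ p.natDegree)
    {m nn : ℕ} (z : Fin (m + 1) → K) (hz1 : z (Fin.last m) = 1)
    (hIm : ∀ η : Fin (m + 1) → F, (∀ i, ‖(η i : K)‖ ≤ 1) → (∃ j, ‖(η j : K)‖ = 1) →
      (q : ℝ) ^ (-(nn : ℤ)) * (⨆ i, ‖z i‖) ≤ ‖∑ i, z i * (η i : K)‖) :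
    (∀ a : Fin (m + 1) → Polynomial Fq, a ≠ 0 →
      (q : ℝ) ^ (-(nn : ℤ)) * (⨆ i, ‖ι (a i)‖) ≤ ‖∑ i, z i * ι (a i)‖) ∧
    (∀ k : ℕ, 1 ≤ k →
      Summable (fun a : {a : Fin (m + 1) → Polynomial Fq // a ≠ 0} =>
        ((∑ i, z i * ι (a.1 i)) ^ k)⁻¹)) := by
  have hq1 : (1 : ℝ) < (q : ℝ) := by exact_mod_cast hq
  have hq0 : (0 : ℝ) < (q : ℝ) := lt_trans one_pos hq1
  have hqn : (0 : ℝ) < (q : ℝ) ^ (-(nn : ℤ)) := zpow_pos hq0 _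
  -- sup of ‖z i‖ is at least 1
  have hM1 : (1 : ℝ) ≤ ⨆ i, ‖z i‖ := by
    calc (1 : ℝ) = ‖z (Fin.last m)‖ := by rw [hz1, norm_one]
      _ ≤ ⨆ i, ‖z i‖ := le_ciSup (f := fun i => ‖z i‖) (Finite.bddAbove_range _) _
  -- the key estimate
  have key : ∀ a : Fin (m + 1) → Polynomial Fq, a ≠ 0 →
      (q : ℝ) ^ (-(nn : ℤ)) * (⨆ i, ‖ι (a i)‖) ≤ ‖∑ i, z i * ι (a i)‖ := by
    intro a ha
    obtain ⟨j, hj⟩ : ∃ j, ∀ i, ‖ι (a i)‖ ≤ ‖ι (a j)‖ :=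
      Finite.exists_max fun i => ‖ι (a i)‖
    obtain ⟨i₀, hi₀⟩ : ∃ i, a i ≠ 0 := Function.ne_iff.mp ha
    have h1le : (1 : ℝ) ≤ ‖ι (a i₀)‖ := by
      rw [hdeg _ hi₀]; exact one_le_pow₀ hq1.le
    have hj0 : (0 : ℝ) < ‖ι (a j)‖ := lt_of_lt_of_le one_pos (le_trans h1le (hj i₀))
    have hjne : ι (a j) ≠ 0 := fun h => by simp [h] at hj0
    have hsup : (⨆ i, ‖ι (a i)‖) = ‖ι (a j)‖ :=
      le_antisymm (ciSup_le hj) (le_ciSup (f := fun i => ‖ι (a i)‖) (Finite.bddAbove_range _) j)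
    set η : Fin (m + 1) → F := fun i =>
      ⟨ι (a i) * (ι (a j))⁻¹, F.mul_mem (hrange _) (F.inv_mem (hrange _))⟩ with hη
    have hηnorm : ∀ i, ‖(η i : K)‖ = ‖ι (a i)‖ * ‖ι (a j)‖⁻¹ := by
      intro i; simp [hη, norm_mul, norm_inv]
    have h1 : ∀ i, ‖(η i : K)‖ ≤ 1 := by
      intro i
      rw [hηnorm i, ← div_eq_mul_inv, div_le_one hj0]
      exact hj i
    have h2 : ∃ j', ‖(η j' : K)‖ = 1 := by
      refine ⟨j, ?_⟩
      rw [hηnorm j, mul_inv_cancel₀ (ne_of_gt hj0)]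
    have hest := hIm η h1 h2
    have hsum : ∑ i, z i * (η i : K) = (∑ i, z i * ι (a i)) * (ι (a j))⁻¹ := by
      rw [Finset.sum_mul]
      exact Finset.sum_congr rfl fun i _ => (mul_assoc _ _ _).symm
    rw [hsum, norm_mul, norm_inv, ← div_eq_mul_inv, le_div_iff₀ hj0] at hest
    rw [hsup]
    calc (q : ℝ) ^ (-(nn : ℤ)) * ‖ι (a j)‖
        = (q : ℝ) ^ (-(nn : ℤ)) * 1 * ‖ι (a j)‖ := by ring
      _ ≤ (q : ℝ) ^ (-(nn : ℤ)) * (⨆ i, ‖z i‖) * ‖ι (a j)‖ := by gcongr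
      _ ≤ ‖∑ i, z i * ι (a i)‖ := hest
  refine ⟨key, ?_⟩
  -- convergence
  intro k hk
  rw [summable_iff_vanishing_norm]
  intro ε hε
  classical
  -- bound on the norm of the terms
  set C : ℝ := (q : ℝ) ^ (nn : ℕ) * max 1 ε⁻¹ with hC
  have hC0 : 0 < C := mul_pos (pow_pos hq0 _) (lt_of_lt_of_le one_pos (le_max_left _ _))
  obtain ⟨D, hD⟩ : ∃ D : ℕ, C < (q : ℝ) ^ D := pow_unbounded_of_one_lt C hq1
  -- the set of `a` with a large term is finite
  have hfin : {x : {a : Fin (m + 1) → Polynomial Fq // a ≠ 0} |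
      ε ≤ ‖((∑ i, z i * ι (x.1 i)) ^ k)⁻¹‖}.Finite := by
    have hfinset : ({a : Fin (m + 1) → Polynomial Fq |
        ∀ i, (a i).natDegree ≤ D} : Set _).Finite := by
      have := (finite_natDegree_le (Fq := Fq) D)
      have : (Set.univ.pi fun _ : Fin (m + 1) =>
          {p : Polynomial Fq | p.natDegree ≤ D}).Finite :=
        Set.Finite.pi fun _ => finite_natDegree_le D
      refine this.subset ?_
      intro a ha i _
      exact ha i
    refine ((hfinset.preimage (Subtype.val_injective.injOn)).subset ?_)
    intro x hx
    simp only [Set.mem_setOf_eq] at hx ⊢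
    -- from the estimate: ‖S‖ ≥ q^{-nn} * ‖ι (x.1 i)‖ for each i
    have hkey := key x.1 x.2
    obtain ⟨i₀, hi₀⟩ : ∃ i, x.1 i ≠ 0 := Function.ne_iff.mp x.2
    have hone : (1 : ℝ) ≤ ⨆ i, ‖ι (x.1 i)‖ := by
      refine le_trans ?_ (le_ciSup (f := fun i => ‖ι (x.1 i)‖) (Finite.bddAbove_range _) i₀)
      rw [hdeg _ hi₀]; exact one_le_pow₀ hq1.le
    have hS0 : (0 : ℝ) < ‖∑ i, z i * ι (x.1 i)‖ :=
      lt_of_lt_of_le (by nlinarith) hkey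
    intro i
    by_contra hdi
    push_neg at hdi
    have hxi : x.1 i ≠ 0 := by
      intro h; rw [h] at hdi; simp at hdi
    -- ‖ι (x.1 i)‖ = q ^ natDegree > C
    have hbig : C < ‖ι (x.1 i)‖ := by
      rw [hdeg _ hxi]
      exact lt_of_lt_of_le hD (pow_le_pow_right₀ hq1.le hdi.le)
    -- hence ‖S‖ ≥ q^{-nn} * ‖ι (x.1 i)‖ > q^{-nn} * C = max 1 ε⁻¹ ≥ 1 and ≥ ε⁻¹
    have hSi : (q : ℝ) ^ (-(nn : ℤ)) * ‖ι (x.1 i)‖ ≤ ‖∑ j, z j * ι (x.1 j)‖ := by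
      refine le_trans ?_ hkey
      exact mul_le_mul_of_nonneg_left (le_ciSup (f := fun i => ‖ι (x.1 i)‖) (Finite.bddAbove_range _) i) hqn.le
    have hSgt : max 1 ε⁻¹ < ‖∑ j, z j * ι (x.1 j)‖ := by
      have : (q : ℝ) ^ (-(nn : ℤ)) * C < (q : ℝ) ^ (-(nn : ℤ)) * ‖ι (x.1 i)‖ :=
        mul_lt_mul_of_pos_left hbig hqn
      have hCc : (q : ℝ) ^ (-(nn : ℤ)) * C = max 1 ε⁻¹ := by
        rw [hC, ← mul_assoc, ← zpow_natCast (q : ℝ) nn, ← zpow_add₀ (ne_of_gt hq0)]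
        simp
      linarith [le_trans this.le hSi]
    -- so ‖S^k‖⁻¹ < ε, contradiction with hx
    have h1S : (1 : ℝ) < ‖∑ j, z j * ι (x.1 j)‖ :=
      lt_of_le_of_lt (le_max_left _ _) hSgt
    have hεS : ε⁻¹ < ‖∑ j, z j * ι (x.1 j)‖ ^ k := by
      calc ε⁻¹ ≤ max 1 ε⁻¹ := le_max_right _ _
        _ < ‖∑ j, z j * ι (x.1 j)‖ := hSgt
        _ = ‖∑ j, z j * ι (x.1 j)‖ ^ 1 := (pow_one _).symm
        _ ≤ ‖∑ j, z j * ι (x.1 j)‖ ^ k := pow_le_pow_right₀ h1S.le hk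
    have : ‖((∑ j, z j * ι (x.1 j)) ^ k)⁻¹‖ < ε := by
      rw [norm_inv, norm_pow]
      rw [inv_lt_iff_one_lt_mul₀ (by positivity)]
      have := (inv_lt_iff_one_lt_mul₀ hε).mp hεS
      linarith [mul_comm ε (‖∑ j, z j * ι (x.1 j)‖ ^ k), this]
    linarith [hx]
  refine ⟨hfin.toFinset, fun t ht => ?_⟩
  refine norm_sum_lt_of_ultra hna _ hε t fun i hi => ?_
  by_contra h
  push_neg at h
  exact (Finset.disjoint_left.mp ht hi) (hfin.mem_toFinset.mpr h)
end
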